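/- In the ring ℤ_p[Γ_n] with Γ_n cyclic of order pⁿ generated by γ, the intersection of the augmentation ideal (γ − 1) with the ideal (p^u) equals the principal ideal (p^u(γ − 1)). -/

import Mathlib

noncomputable abbrev padicGroupRing (p n : ℕ) [Fact p.Prime] : Type :=
  MonoidAlgebra ℤ_[p] (Multiplicative (ZMod (p ^ n)))

noncomputable def γgen (p n : ℕ) [Fact p.Prime] : padicGroupRing p n :=
  MonoidAlgebra.of ℤ_[p] (Multiplicative (ZMod (p ^ n))) (Multiplicative.ofAdd 1)

section aux

variable (p n : ℕ) [Fact p.Prime]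

noncomputable def myAug : padicGroupRing p n →ₐ[ℤ_[p]] ℤ_[p] :=
  MonoidAlgebra.lift ℤ_[p] ℤ_[p] (Multiplicative (ZMod (p ^ n))) (1 : Multiplicative (ZMod (p ^ n)) →* ℤ_[p])

lemma myAug_of (g : Multiplicative (ZMod (p ^ n))) :
    myAug p n (MonoidAlgebra.of ℤ_[p] _ g) = 1 := by
  rw [myAug, MonoidAlgebra.lift_of]
  rfl

lemma of_mem_span (g : Multiplicative (ZMod (p ^ n))) :
    MonoidAlgebra.of ℤ_[p] _ g - 1 ∈ Ideal.span {γgen p n - 1} := by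
  haveI : NeZero (p ^ n) := ⟨pow_ne_zero _ (Fact.out : p.Prime).ne_zero⟩
  have hg : MonoidAlgebra.of ℤ_[p] (Multiplicative (ZMod (p ^ n))) g
      = (γgen p n) ^ (Multiplicative.toAdd g).val := by
    rw [γgen, ← map_pow]
    congr 1
    rw [← ofAdd_nsmul]
    simp only [nsmul_eq_mul, mul_one]
    rw [ZMod.natCast_rightInverse (Multiplicative.toAdd g), ofAdd_toAdd]
  rw [hg, Ideal.mem_span_singleton]
  simpa using sub_dvd_pow_sub_pow (γgen p n) 1 (Multiplicative.toAdd g).val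

lemma mem_span_of_aug_eq_zero (x : padicGroupRing p n) (hx : myAug p n x = 0) :
    x ∈ Ideal.span {γgen p n - 1} := by
  have key : ∀ y : padicGroupRing p n,
      y - (myAug p n y) • 1 ∈ Ideal.span {γgen p n - 1} := by
    intro y
    induction y using MonoidAlgebra.induction_linear with
    | zero => simp
    | add a b ha hb =>
        have := Ideal.add_mem _ ha hb
        convert this using 1
        rw [map_add, add_smul]
        ring
    | single g a =>
        have h1 : (MonoidAlgebra.single g a : padicGroupRing p n)
            = a • MonoidAlgebra.of ℤ_[p] _ g := by
          rw [MonoidAlgebra.of_apply, MonoidAlgebra.smul_single', mul_one]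
        rw [h1, map_smul, myAug_of, smul_eq_mul, mul_one, ← smul_sub]
        exact Submodule.smul_of_tower_mem _ a (of_mem_span p n g)
  have := key x
  rwa [hx, zero_smul, sub_zero] at this

lemma myAug_gamma_sub_one : myAug p n (γgen p n - 1) = 0 := by
  rw [map_sub, map_one, γgen, myAug_of, sub_self]

end aux

/-- In `ℤ_p[Γ_n]`, the intersection of the augmentation ideal `(γ − 1)` with the ideal
`(p^u)` is the principal ideal `(p^u(γ − 1))`. -/
theorem aug_inter_p_pow (p u n : ℕ) [Fact p.Prime] :
    Ideal.span {γgen p n - 1} ⊓ Ideal.span {(p : padicGroupRing p n) ^ u} =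
      Ideal.span {(p : padicGroupRing p n) ^ u * (γgen p n - 1)} := by
  apply le_antisymm
  · intro x hx
    rw [Ideal.mem_inf] at hx
    obtain ⟨hx1, hx2⟩ := hx
    rw [Ideal.mem_span_singleton] at hx1 hx2 ⊢
    obtain ⟨y, hy⟩ := hx2
    -- augmentation of x is zero
    have haugx : myAug p n x = 0 := by
      obtain ⟨z, hz⟩ := hx1
      rw [hz, map_mul, myAug_gamma_sub_one, zero_mul]
    have haugy : myAug p n y = 0 := by
      have : (p : ℤ_[p]) ^ u * myAug p n y = 0 := by
        rw [hy, map_mul, map_pow, map_natCast] at haugx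
        exact haugx
      have hp : ((p : ℤ_[p]) ^ u) ≠ 0 :=
        pow_ne_zero _ (Nat.cast_ne_zero.mpr (Fact.out : p.Prime).ne_zero)
      exact (mul_eq_zero.mp this).resolve_left hp
    have hym := mem_span_of_aug_eq_zero p n y haugy
    rw [Ideal.mem_span_singleton] at hym
    obtain ⟨c, hc⟩ := hym
    exact ⟨c, by rw [hy, hc]; ring⟩
  · rw [Ideal.span_le, Set.singleton_subset_iff]
    exact ⟨Ideal.mem_span_singleton.mpr (dvd_mul_left _ _),
      Ideal.mem_span_singleton.mpr (dvd_mul_right _ _)⟩
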